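/- Let ρ > 0 be a real number, v ∈ ℝ³, and σ a real symmetric positive-definite 3×3 matrix. Then det Ĝ(ρ,v,σ) = −ρ · det σ. In particular Ĝ(ρ,v,σ) is invertible and has negative determinant. -/

import Mathlib

open Matrix

/-- The ether matrix `Ĝ(ρ, v, σ)`: a symmetric 4×4 matrix with
`Ĝ⁰⁰ = ρ`, `Ĝ⁰ᵃ = Ĝᵃ⁰ = ρ vᵃ`, `Ĝᵃᵇ = ρ vᵃ vᵇ − σᵃᵇ`. -/
noncomputable def etherG (ρ : ℝ) (v : Fin 3 → ℝ) (σ : Matrix (Fin 3) (Fin 3) ℝ) :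
    Matrix (Fin 4) (Fin 4) ℝ :=
  Matrix.of fun i j =>
    Fin.cases
      (Fin.cases ρ (fun b => ρ * v b) j)
      (fun a => Fin.cases (ρ * v a) (fun b => ρ * v a * v b - σ a b) j) i

/-- for `ρ > 0`, `v ∈ ℝ³` and `σ` symmetric positive definite,
`det Ĝ(ρ,v,σ) = −ρ · det σ`; in particular `Ĝ(ρ,v,σ)` is invertible and has
negative determinant. -/
theorem etherG_det (ρ : ℝ) (hρ : 0 < ρ) (v : Fin 3 → ℝ)
    (σ : Matrix (Fin 3) (Fin 3) ℝ) (hσ : σ.PosDef) :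
    (etherG ρ v σ).det = -(ρ * σ.det) ∧
    IsUnit (etherG ρ v σ).det ∧
    (etherG ρ v σ).det < 0 := by
  have heq : etherG ρ v σ =
      !![ρ, ρ * v 0, ρ * v 1, ρ * v 2;
         ρ * v 0, ρ * v 0 * v 0 - σ 0 0, ρ * v 0 * v 1 - σ 0 1, ρ * v 0 * v 2 - σ 0 2;
         ρ * v 1, ρ * v 1 * v 0 - σ 1 0, ρ * v 1 * v 1 - σ 1 1, ρ * v 1 * v 2 - σ 1 2;
         ρ * v 2, ρ * v 2 * v 0 - σ 2 0, ρ * v 2 * v 1 - σ 2 1, ρ * v 2 * v 2 - σ 2 2] := by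
    ext i j
    fin_cases i <;> fin_cases j <;> rfl
  have hdet : (etherG ρ v σ).det = -(ρ * σ.det) := by
    rw [heq]
    simp [Matrix.det_succ_row_zero, Fin.sum_univ_succ, Matrix.det_fin_three, Fin.succAbove, Fin.castSucc, Fin.castAdd, Fin.castLE]
    ring
  have hσd : 0 < σ.det := hσ.det_pos
  have hneg : (etherG ρ v σ).det < 0 := by
    rw [hdet]; nlinarith
  exact ⟨hdet, isUnit_iff_ne_zero.mpr (ne_of_lt hneg), hneg⟩
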